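/- For every nonnegative integer n: Σ_{k=0}^n q^{k²} / ((q²;q²)_k (q;q)_{n−k}) = Σ_{k=−n}^n (−1)^k q^{2k²} / ((q;q)_{n−k} (q;q)_{n+k}). -/

import Mathlib

open Finset

noncomputable def qp (x q : ℂ) (n : ℕ) : ℂ := ∏ j ∈ Finset.range n, (1 - x * q ^ j)

noncomputable def qpinf (x q : ℂ) : ℂ := ∏' j : ℕ, (1 - x * q ^ j)

noncomputable def qbinom (q : ℂ) (n k : ℕ) : ℂ := qp q q n / (qp q q k * qp q q (n - k))

noncomputable def RS (a b q : ℂ) (n : ℕ) : ℂ :=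
  ∑ k ∈ Finset.range (n + 1), qbinom q n k * a ^ k * b ^ (n - k)

noncomputable def Tsum (q : ℂ) (r n s : ℕ) : ℂ :=
  ∑ k ∈ Finset.range (n + 1),
    qp (q ^ (-(2 * (n : ℤ)))) (q ^ 2) k / (qp q q k * qp (q ^ ((1 : ℤ) + r - n)) q k)
      * q ^ ((2 - (s : ℤ)) * k)

noncomputable def gam (q : ℂ) (n : ℕ) : ℂ :=
  ∑ k ∈ Finset.range (n + 1), qbinom q n k * q ^ (k ^ 2) / qp (-q) q k

lemma qp_succ (x q : ℂ) (n : ℕ) : qp x q (n+1) = qp x q n * (1 - x * q ^ n) := by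
  simp [qp, Finset.prod_range_succ]

lemma one_sub_pow_ne {q : ℂ} (hq : ‖q‖ < 1) (m : ℕ) (hm : 1 ≤ m) :
    (1:ℂ) - q ^ m ≠ 0 := by
  intro h
  have h1 : q ^ m = 1 := by linear_combination -h
  have : ‖q ^ m‖ < 1 := by
    rw [norm_pow]
    calc ‖q‖ ^ m ≤ ‖q‖ ^ 1 :=
      pow_le_pow_of_le_one (norm_nonneg q) hq.le hm
    _ < 1 := by simpa using hq
  rw [h1] at this; simp at this

lemma qp_ne {q : ℂ} (hq : ‖q‖ < 1) (m : ℕ) : qp q q m ≠ 0 := by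
  rw [qp]
  apply Finset.prod_ne_zero_iff.2
  intro j _
  have := one_sub_pow_ne hq (j+1) (by omega)
  rw [pow_succ'] at this
  simpa using this

lemma abs_sq_lt {q : ℂ} (hq : ‖q‖ < 1) : ‖q^2‖ < 1 := by
  rw [norm_pow]
  calc ‖q‖ ^ 2 ≤ ‖q‖ ^ 1 :=
        pow_le_pow_of_le_one (norm_nonneg q) hq.le (by omega)
  _ < 1 := by simpa using hq

lemma qp2_ne {q : ℂ} (hq : ‖q‖ < 1) (m : ℕ) : qp (q^2) (q^2) m ≠ 0 :=
  qp_ne (abs_sq_lt hq) m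

noncomputable def Lsummand (q : ℂ) (n k : ℕ) : ℂ :=
  q ^ (k^2) / (qp (q^2) (q^2) k * qp q q (n - k))
noncomputable def LL (q : ℂ) (n : ℕ) : ℂ := ∑ k ∈ Finset.range (n+1), Lsummand q n k

lemma Lcert (q : ℂ) (hq : ‖q‖ < 1) (N k : ℕ) (hk : k < N) :
    ((1 - q^(2*N)) - (1+q+q^(2*N-1))*(1-q^(N-k)) + q*(1-q^(N-k))*(1-q^(N-1-k)))
      * Lsummand q N k
    = (q^(2*N) - q^(2*(N-(k+1)))) * Lsummand q N (k+1)
      - (q^(2*N) - q^(2*(N-k))) * Lsummand q N k := by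
  obtain ⟨j, rfl⟩ : ∃ j, N = k + j + 1 := ⟨N - k - 1, by omega⟩
  have e1 : k + j + 1 - k = j + 1 := by omega
  have e2 : k + j + 1 - (k+1) = j := by omega
  have e3 : k + j + 1 - 1 - k = j := by omega
  have e4 : 2*(k+j+1) - 1 = 2*k + 2*j + 1 := by omega
  rw [Lsummand, Lsummand, e1, e2, e3, e4, qp_succ q q j, qp_succ (q^2) (q^2) k]
  have h1 : qp q q j ≠ 0 := qp_ne hq j
  have h2 : qp (q^2) (q^2) k ≠ 0 := qp2_ne hq k
  have h3 : (1:ℂ) - q * q ^ j ≠ 0 := by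
    have := one_sub_pow_ne hq (j+1) (by omega); rwa [pow_succ'] at this
  have h4 : (1:ℂ) - q^2 * (q^2) ^ k ≠ 0 := by
    have := one_sub_pow_ne (abs_sq_lt hq) (k+1) (by omega); rwa [pow_succ'] at this
  field_simp
  ring

lemma Lstep1 (q : ℂ) (hq : ‖q‖ < 1) (n k : ℕ) (hk : k ≤ n + 1) :
    Lsummand q (n+1) k = (1 - q^(n+2-k)) * Lsummand q (n+2) k := by
  have e : n + 2 - k = ((n+1) - k) + 1 := by omega
  rw [Lsummand, Lsummand, e, qp_succ]
  have h1 : qp q q ((n+1)-k) ≠ 0 := qp_ne hq _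
  have h2 : qp (q^2) (q^2) k ≠ 0 := qp2_ne hq k
  have h3 : (1:ℂ) - q * q ^ ((n+1)-k) ≠ 0 := by
    have := one_sub_pow_ne hq ((n+1)-k+1) (by omega); rwa [pow_succ'] at this
  field_simp
  ring

lemma Lstep2 (q : ℂ) (hq : ‖q‖ < 1) (n k : ℕ) (hk : k ≤ n) :
    Lsummand q n k = (1 - q^(n+2-k)) * (1 - q^(n+2-1-k)) * Lsummand q (n+2) k := by
  have e : n + 2 - k = ((n+1) - k) + 1 := by omega
  have e2 : n + 2 - 1 - k = (n - k) + 1 := by omega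
  have e3 : n + 1 - k = (n - k) + 1 := by omega
  rw [Lsummand, Lsummand, e, e2, e3, qp_succ, qp_succ]
  have h1 : qp q q (n-k) ≠ 0 := qp_ne hq _
  have h2 : qp (q^2) (q^2) k ≠ 0 := qp2_ne hq k
  have h3 : (1:ℂ) - q * q ^ (n-k) ≠ 0 := by
    have := one_sub_pow_ne hq ((n-k)+1) (by omega); rwa [pow_succ'] at this
  have h4 : (1:ℂ) - q * q ^ ((n-k)+1) ≠ 0 := by
    have := one_sub_pow_ne hq ((n-k)+2) (by omega)
    rwa [show (n-k)+2 = ((n-k)+1)+1 by omega, pow_succ'] at this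
  field_simp
  ring

lemma Lrec (q : ℂ) (hq : ‖q‖ < 1) (n : ℕ) :
    (1 - q^(2*(n+2))) * LL q (n+2)
      = (1 + q + q^(2*(n+2)-1)) * LL q (n+1) - q * LL q n := by
  have hL1 : LL q (n+1) = ∑ k ∈ Finset.range (n+3), (1 - q^(n+2-k)) * Lsummand q (n+2) k := by
    rw [LL]
    rw [Finset.sum_congr rfl fun k hk => Lstep1 q hq n k (by simp at hk; omega)]
    apply Finset.sum_subset
    · intro x hx; simp at hx ⊢; omega
    · intro x hx hxn
      have : x = n + 2 := by simp at hx hxn; omega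
      subst this
      simp [show n + 2 - (n+2) = 0 by omega]
  have hL0 : LL q n = ∑ k ∈ Finset.range (n+3),
      (1 - q^(n+2-k)) * (1 - q^(n+2-1-k)) * Lsummand q (n+2) k := by
    rw [LL]
    rw [Finset.sum_congr rfl fun k hk => Lstep2 q hq n k (by simp at hk; omega)]
    apply Finset.sum_subset
    · intro x hx; simp at hx ⊢; omega
    · intro x hx hxn
      have hx' : x = n + 1 ∨ x = n + 2 := by simp at hx hxn; omega
      rcases hx' with h | h <;> subst h
      · simp [show n + 2 - 1 - (n+1) = 0 by omega]
      · simp [show n + 2 - (n+2) = 0 by omega]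
  have key : ∑ k ∈ Finset.range (n+3),
      (((1 - q^(2*(n+2))) - (1+q+q^(2*(n+2)-1))*(1-q^(n+2-k))
          + q*(1-q^(n+2-k))*(1-q^(n+2-1-k)))
        * Lsummand q (n+2) k) = 0 := by
    rw [Finset.sum_range_succ]
    have htel : ∑ k ∈ Finset.range (n+2),
        (((1 - q^(2*(n+2))) - (1+q+q^(2*(n+2)-1))*(1-q^(n+2-k))
            + q*(1-q^(n+2-k))*(1-q^(n+2-1-k)))
          * Lsummand q (n+2) k)
        = (fun i => (q^(2*(n+2)) - q^(2*(n+2-i))) * Lsummand q (n+2) i) (n+2)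
          - (fun i => (q^(2*(n+2)) - q^(2*(n+2-i))) * Lsummand q (n+2) i) 0 := by
      rw [← Finset.sum_range_sub
        (f := fun i => (q^(2*(n+2)) - q^(2*(n+2-i))) * Lsummand q (n+2) i) (n := n+2)]
      exact Finset.sum_congr rfl fun k hk => Lcert q hq (n+2) k (by simp at hk; omega)
    rw [htel]
    simp only [show n + 2 - (n+2) = 0 by omega, show n + 2 - 0 = n + 2 by omega,
      show n + 2 - 1 - (n+2) = 0 by omega, Nat.mul_zero, pow_zero]
    ring
  rw [hL1, hL0, LL]
  have expand : (1 - q^(2*(n+2))) * (∑ k ∈ Finset.range (n+3), Lsummand q (n+2) k)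
      - ((1 + q + q^(2*(n+2)-1)) * (∑ k ∈ Finset.range (n+3), (1 - q^(n+2-k)) * Lsummand q (n+2) k)
        - q * (∑ k ∈ Finset.range (n+3),
            (1 - q^(n+2-k)) * (1 - q^(n+2-1-k)) * Lsummand q (n+2) k))
      = ∑ k ∈ Finset.range (n+3),
      (((1 - q^(2*(n+2))) - (1+q+q^(2*(n+2)-1))*(1-q^(n+2-k))
          + q*(1-q^(n+2-k))*(1-q^(n+2-1-k)))
        * Lsummand q (n+2) k) := by
    rw [Finset.mul_sum, Finset.mul_sum, Finset.mul_sum, ← Finset.sum_sub_distrib,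
      ← Finset.sum_sub_distrib]
    exact Finset.sum_congr rfl fun k _ => by ring
  have h := expand.trans key
  linear_combination h

noncomputable def Rsummand (q : ℂ) (n : ℕ) (k : ℤ) : ℂ :=
  (-1:ℂ)^k * q^(2*k^2) / (qp q q ((n:ℤ) - k).toNat * qp q q ((n:ℤ) + k).toNat)

noncomputable def RR (q : ℂ) (n : ℕ) : ℂ :=
  ∑ k ∈ Finset.Icc (-(n:ℤ)) (n:ℤ), Rsummand q n k

lemma Icc_succ_top' (a b : ℤ) (h : a ≤ b + 1) :
    Finset.Icc a (b+1) = insert (b+1) (Finset.Icc a b) := by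
  ext x; simp [Finset.mem_Icc, Finset.mem_insert]; omega

lemma sum_tel (g : ℤ → ℂ) (a b : ℤ) (h : a - 1 ≤ b) :
    ∑ k ∈ Finset.Icc a b, (g (k+1) - g k) = g (b+1) - g a := by
  obtain ⟨m, hm⟩ : ∃ m : ℕ, b = a - 1 + m := ⟨(b+1-a).toNat, by omega⟩
  subst hm
  clear h
  induction m with
  | zero =>
    simp only [Nat.cast_zero, add_zero]
    rw [Finset.Icc_eq_empty (by omega), show a - 1 + 1 = a by ring]
    simp
  | succ m ih =>
    push_cast
    rw [show a - 1 + ((m:ℤ) + 1) = (a - 1 + (m:ℤ)) + 1 by ring]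
    rw [Icc_succ_top' a (a - 1 + (m:ℤ)) (by omega),
      Finset.sum_insert (by simp [Finset.mem_Icc])]
    rw [ih]
    ring

lemma Rstep1 (q : ℂ) (hq : ‖q‖ < 1) (n : ℕ) (k : ℤ)
    (hk1 : -((n:ℤ)+1) ≤ k) (hk2 : k ≤ (n:ℤ)+1) :
    Rsummand q (n+1) k
      = (1 - q^(((n:ℤ)+2-k).toNat)) * (1 - q^(((n:ℤ)+2+k).toNat)) * Rsummand q (n+2) k := by
  obtain ⟨a, ha⟩ : ∃ a : ℕ, (n:ℤ) + 1 - k = (a:ℤ) := ⟨((n:ℤ)+1-k).toNat, by omega⟩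
  obtain ⟨b, hb⟩ : ∃ b : ℕ, (n:ℤ) + 1 + k = (b:ℤ) := ⟨((n:ℤ)+1+k).toNat, by omega⟩
  have e1 : ((n:ℤ)+2-k).toNat = a + 1 := by omega
  have e2 : ((n:ℤ)+2+k).toNat = b + 1 := by omega
  have e3 : (((n+1:ℕ)):ℤ) - k = (a:ℤ) := by push_cast; omega
  have e4 : (((n+1:ℕ)):ℤ) + k = (b:ℤ) := by push_cast; omega
  have e5 : (((n+2:ℕ)):ℤ) - k = ((a+1:ℕ):ℤ) := by push_cast; omega
  have e6 : (((n+2:ℕ)):ℤ) + k = ((b+1:ℕ):ℤ) := by push_cast; omega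
  rw [Rsummand, Rsummand, e1, e2, e3, e4, e5, e6, Int.toNat_natCast, Int.toNat_natCast,
    Int.toNat_natCast, Int.toNat_natCast, qp_succ, qp_succ]
  have h1 : qp q q a ≠ 0 := qp_ne hq a
  have h2 : qp q q b ≠ 0 := qp_ne hq b
  have h3 : (1:ℂ) - q * q ^ a ≠ 0 := by
    have := one_sub_pow_ne hq (a+1) (by omega); rwa [pow_succ'] at this
  have h4 : (1:ℂ) - q * q ^ b ≠ 0 := by
    have := one_sub_pow_ne hq (b+1) (by omega); rwa [pow_succ'] at this
  field_simp
  ring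

lemma Rstep2 (q : ℂ) (hq : ‖q‖ < 1) (n : ℕ) (k : ℤ)
    (hk1 : -(n:ℤ) ≤ k) (hk2 : k ≤ (n:ℤ)) :
    Rsummand q n k
      = (1 - q^(((n:ℤ)+2-k).toNat)) * (1 - q^(((n:ℤ)+1-k).toNat))
        * (1 - q^(((n:ℤ)+2+k).toNat)) * (1 - q^(((n:ℤ)+1+k).toNat)) * Rsummand q (n+2) k := by
  obtain ⟨a, ha⟩ : ∃ a : ℕ, (n:ℤ) - k = (a:ℤ) := ⟨((n:ℤ)-k).toNat, by omega⟩
  obtain ⟨b, hb⟩ : ∃ b : ℕ, (n:ℤ) + k = (b:ℤ) := ⟨((n:ℤ)+k).toNat, by omega⟩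
  have e1 : ((n:ℤ)+2-k).toNat = a + 2 := by omega
  have e2 : ((n:ℤ)+1-k).toNat = a + 1 := by omega
  have e3 : ((n:ℤ)+2+k).toNat = b + 2 := by omega
  have e4 : ((n:ℤ)+1+k).toNat = b + 1 := by omega
  have e5 : ((n:ℤ)) - k = ((a:ℕ):ℤ) := by omega
  have e6 : ((n:ℤ)) + k = ((b:ℕ):ℤ) := by omega
  have e7 : (((n+2:ℕ)):ℤ) - k = ((a+2:ℕ):ℤ) := by push_cast; omega
  have e8 : (((n+2:ℕ)):ℤ) + k = ((b+2:ℕ):ℤ) := by push_cast; omega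
  rw [Rsummand, Rsummand, e1, e2, e3, e4, e5, e6, e7, e8, Int.toNat_natCast, Int.toNat_natCast,
    Int.toNat_natCast, Int.toNat_natCast]
  rw [show a + 2 = (a+1)+1 by omega, show b + 2 = (b+1)+1 by omega, qp_succ, qp_succ,
    qp_succ, qp_succ]
  have h1 : qp q q a ≠ 0 := qp_ne hq a
  have h2 : qp q q b ≠ 0 := qp_ne hq b
  have h3 : (1:ℂ) - q * q ^ a ≠ 0 := by
    have := one_sub_pow_ne hq (a+1) (by omega); rwa [pow_succ'] at this
  have h4 : (1:ℂ) - q * q ^ b ≠ 0 := by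
    have := one_sub_pow_ne hq (b+1) (by omega); rwa [pow_succ'] at this
  have h5 : (1:ℂ) - q * q ^ (a+1) ≠ 0 := by
    have := one_sub_pow_ne hq (a+2) (by omega)
    rwa [show a+2 = (a+1)+1 by omega, pow_succ'] at this
  have h6 : (1:ℂ) - q * q ^ (b+1) ≠ 0 := by
    have := one_sub_pow_ne hq (b+2) (by omega)
    rwa [show b+2 = (b+1)+1 by omega, pow_succ'] at this
  have h5' : (1:ℂ) - q ^ (a+1) * q ≠ 0 := by rwa [mul_comm]
  have h6' : (1:ℂ) - q ^ (b+1) * q ≠ 0 := by rwa [mul_comm]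
  field_simp
  ring

lemma neg_one_zpow_succ (k : ℤ) : (-1:ℂ)^(k+1) = -(-1:ℂ)^k := by
  rw [zpow_add₀ (by norm_num : (-1:ℂ) ≠ 0)]; simp

-- ratio lemma, generic case
lemma Rratio (q : ℂ) (hq0 : q ≠ 0) (hq : ‖q‖ < 1) (n : ℕ) (k : ℤ) (a b : ℕ)
    (ha : (n:ℤ) + 1 - k = (a:ℤ)) (hb : (n:ℤ) + 1 + k = (b:ℤ)) :
    q^(2*a) * (1 - q*q^(b+1)) * Rsummand q (n+2) (k+1)
      = -(q^(2*b+2)) * (1 - q*q^a) * Rsummand q (n+2) k := by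
  have e7 : (((n+2:ℕ)):ℤ) - k = ((a+1:ℕ):ℤ) := by push_cast; omega
  have e8 : (((n+2:ℕ)):ℤ) + k = ((b+1:ℕ):ℤ) := by push_cast; omega
  have e9 : (((n+2:ℕ)):ℤ) - (k+1) = ((a:ℕ):ℤ) := by push_cast; omega
  have e10 : (((n+2:ℕ)):ℤ) + (k+1) = ((b+2:ℕ):ℤ) := by push_cast; omega
  have hcore : (q:ℂ) ^ (2*(k+1)^2) * q^(2*a) = q^(2*k^2) * q^(2*b+2) := by
    rw [← zpow_natCast q (2*a), ← zpow_natCast q (2*b+2), ← zpow_add₀ hq0, ← zpow_add₀ hq0]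
    congr 1
    have ea : (a:ℤ) = (n:ℤ)+1-k := by omega
    have eb : (b:ℤ) = (n:ℤ)+1+k := by omega
    push_cast
    rw [ea, eb]
    ring
  rw [Rsummand, Rsummand, e7, e8, e9, e10, Int.toNat_natCast, Int.toNat_natCast,
    Int.toNat_natCast, Int.toNat_natCast, neg_one_zpow_succ]
  rw [show b+2 = (b+1)+1 by omega, qp_succ q q (b+1), qp_succ q q a]
  have hPa : qp q q a ≠ 0 := qp_ne hq a
  have hPb : qp q q (b+1) ≠ 0 := qp_ne hq _
  have h3 : (1:ℂ) - q * q ^ a ≠ 0 := by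
    have := one_sub_pow_ne hq (a+1) (by omega); rwa [pow_succ'] at this
  have h4 : (1:ℂ) - q * q ^ (b+1) ≠ 0 := by
    have := one_sub_pow_ne hq (b+2) (by omega)
    rwa [show b+2 = (b+1)+1 by omega, pow_succ'] at this
  field_simp
  linear_combination -hcore

lemma Rratio0 (q : ℂ) (hq0 : q ≠ 0) (hq : ‖q‖ < 1) (n : ℕ) :
    (1 - q*q^(2*n+3)) * Rsummand q (n+2) (-((n:ℤ)+2))
      = -(q^(4*n+6)) * (1 - q*q^0) * Rsummand q (n+2) (-((n:ℤ)+2)+1) := by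
  have e7 : (((n+2:ℕ)):ℤ) - (-((n:ℤ)+2)) = ((2*n+4:ℕ):ℤ) := by push_cast; omega
  have e8 : (((n+2:ℕ)):ℤ) + (-((n:ℤ)+2)) = ((0:ℕ):ℤ) := by push_cast; omega
  have e9 : (((n+2:ℕ)):ℤ) - (-((n:ℤ)+2)+1) = ((2*n+3:ℕ):ℤ) := by push_cast; omega
  have e10 : (((n+2:ℕ)):ℤ) + (-((n:ℤ)+2)+1) = ((1:ℕ):ℤ) := by push_cast; omega
  have hcore : (q:ℂ) ^ (2*(-((n:ℤ)+2))^2) = q ^ (2*(-((n:ℤ)+2)+1)^2) * q^(4*n+6) := by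
    rw [← zpow_natCast q (4*n+6), ← zpow_add₀ hq0]
    congr 1
    push_cast
    ring
  rw [Rsummand, Rsummand, e7, e8, e9, e10, Int.toNat_natCast, Int.toNat_natCast,
    Int.toNat_natCast, Int.toNat_natCast, neg_one_zpow_succ, hcore]
  rw [show 2*n+4 = (2*n+3)+1 by omega, qp_succ q q (2*n+3), qp_succ q q 0]
  have hP : qp q q (2*n+3) ≠ 0 := qp_ne hq _
  have h0 : qp q q 0 = 1 := by simp [qp]
  have h3 : (1:ℂ) - q * q ^ (2*n+3) ≠ 0 := by
    have := one_sub_pow_ne hq (2*n+4) (by omega)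
    rwa [show 2*n+4 = (2*n+3)+1 by omega, pow_succ'] at this
  have h4 : (1:ℂ) - q ≠ 0 := by
    have := one_sub_pow_ne hq 1 (by omega); rwa [pow_one] at this
  rw [h0]
  simp only [pow_zero, mul_one]
  field_simp

lemma Rcert (q : ℂ) (hq0 : q ≠ 0) (hq : ‖q‖ < 1) (n : ℕ) (k : ℤ)
    (hk1 : -((n:ℤ)+2) ≤ k) (hk2 : k ≤ (n:ℤ)+1) :
    ((1 - q^(2*n+4))
      - (1+q+q^(2*n+3)) * ((1 - q^(((n:ℤ)+2-k).toNat)) * (1 - q^(((n:ℤ)+2+k).toNat)))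
      + q * ((1 - q^(((n:ℤ)+2-k).toNat)) * (1 - q^(((n:ℤ)+1-k).toNat))
           * (1 - q^(((n:ℤ)+2+k).toNat)) * (1 - q^(((n:ℤ)+1+k).toNat))))
      * Rsummand q (n+2) k
    = (-(q^(((n:ℤ)+2-(k+1)).toNat))^2 * (1 - q^(((n:ℤ)+2+(k+1)).toNat)) * Rsummand q (n+2) (k+1))
      - (-(q^(((n:ℤ)+2-k).toNat))^2 * (1 - q^(((n:ℤ)+2+k).toNat)) * Rsummand q (n+2) k) := by
  rcases eq_or_lt_of_le hk1 with hEq | hGt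
  · -- k = -(n+2)
    have hk : k = -((n:ℤ)+2) := hEq.symm
    subst hk
    have e1 : ((n:ℤ)+2-(-((n:ℤ)+2))).toNat = 2*n+4 := by omega
    have e2 : ((n:ℤ)+1-(-((n:ℤ)+2))).toNat = 2*n+3 := by omega
    have e3 : ((n:ℤ)+2+(-((n:ℤ)+2))).toNat = 0 := by omega
    have e4 : ((n:ℤ)+1+(-((n:ℤ)+2))).toNat = 0 := by omega
    have e5 : ((n:ℤ)+2-((-((n:ℤ)+2))+1)).toNat = 2*n+3 := by omega
    have e6 : ((n:ℤ)+2+((-((n:ℤ)+2))+1)).toNat = 1 := by omega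
    rw [e1, e2, e3, e4, e5, e6]
    linear_combination Rratio0 q hq0 hq n
  · -- generic
    obtain ⟨a, ha⟩ : ∃ a : ℕ, (n:ℤ) + 1 - k = (a:ℤ) := ⟨((n:ℤ)+1-k).toNat, by omega⟩
    obtain ⟨b, hb⟩ : ∃ b : ℕ, (n:ℤ) + 1 + k = (b:ℤ) := ⟨((n:ℤ)+1+k).toNat, by omega⟩
    have e1 : ((n:ℤ)+2-k).toNat = a+1 := by omega
    have e2 : ((n:ℤ)+1-k).toNat = a := by omega
    have e3 : ((n:ℤ)+2+k).toNat = b+1 := by omega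
    have e4 : ((n:ℤ)+1+k).toNat = b := by omega
    have e5 : ((n:ℤ)+2-(k+1)).toNat = a := by omega
    have e6 : ((n:ℤ)+2+(k+1)).toNat = b+2 := by omega
    rw [e1, e2, e3, e4, e5, e6, show 2*n+4 = a+b+2 by omega, show 2*n+3 = a+b+1 by omega]
    linear_combination Rratio q hq0 hq n k a b ha hb


lemma Rstep1' (q : ℂ) (hq : ‖q‖ < 1) (n : ℕ) :
    RR q (n+1) = ∑ k ∈ Finset.Icc (-((n:ℤ)+2)) ((n:ℤ)+2),
      (1 - q^(((n:ℤ)+2-k).toNat)) * (1 - q^(((n:ℤ)+2+k).toNat)) * Rsummand q (n+2) k := by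
  rw [RR]
  rw [Finset.sum_congr rfl (fun k hk => Rstep1 q hq n k
    (by simp [Finset.mem_Icc] at hk; push_cast; omega)
    (by simp [Finset.mem_Icc] at hk; push_cast; omega))]
  apply Finset.sum_subset
  · intro x hx; simp [Finset.mem_Icc] at hx ⊢; push_cast at hx ⊢; omega
  · intro x hx hxn
    have hx' : x = (n:ℤ)+2 ∨ x = -((n:ℤ)+2) := by
      simp [Finset.mem_Icc] at hx hxn; push_cast at hx hxn; omega
    rcases hx' with h | h <;> subst h
    · rw [show (((n:ℤ)+2-((n:ℤ)+2)).toNat) = 0 by omega]; simp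
    · rw [show (((n:ℤ)+2+(-((n:ℤ)+2))).toNat) = 0 by omega]; simp

lemma Rstep2' (q : ℂ) (hq : ‖q‖ < 1) (n : ℕ) :
    RR q n = ∑ k ∈ Finset.Icc (-((n:ℤ)+2)) ((n:ℤ)+2),
      (1 - q^(((n:ℤ)+2-k).toNat)) * (1 - q^(((n:ℤ)+1-k).toNat))
        * (1 - q^(((n:ℤ)+2+k).toNat)) * (1 - q^(((n:ℤ)+1+k).toNat)) * Rsummand q (n+2) k := by
  rw [RR]
  rw [Finset.sum_congr rfl (fun k hk => Rstep2 q hq n k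
    (by simp [Finset.mem_Icc] at hk; omega)
    (by simp [Finset.mem_Icc] at hk; omega))]
  apply Finset.sum_subset
  · intro x hx; simp [Finset.mem_Icc] at hx ⊢; omega
  · intro x hx hxn
    have hx' : x = (n:ℤ)+1 ∨ x = (n:ℤ)+2 ∨ x = -((n:ℤ)+1) ∨ x = -((n:ℤ)+2) := by
      simp [Finset.mem_Icc] at hx hxn; omega
    rcases hx' with h | h | h | h <;> subst h
    · rw [show (((n:ℤ)+1-((n:ℤ)+1)).toNat) = 0 by omega]; simp
    · rw [show (((n:ℤ)+2-((n:ℤ)+2)).toNat) = 0 by omega]; simp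
    · rw [show (((n:ℤ)+1+(-((n:ℤ)+1))).toNat) = 0 by omega]; simp
    · rw [show (((n:ℤ)+2+(-((n:ℤ)+2))).toNat) = 0 by omega]; simp

lemma Rrec (q : ℂ) (hq0 : q ≠ 0) (hq : ‖q‖ < 1) (n : ℕ) :
    (1 - q^(2*n+4)) * RR q (n+2)
      = (1 + q + q^(2*n+3)) * RR q (n+1) - q * RR q n := by
  have hRR : RR q (n+2) = ∑ k ∈ Finset.Icc (-((n:ℤ)+2)) ((n:ℤ)+2), Rsummand q (n+2) k := by
    have hc : ((n+2:ℕ):ℤ) = (n:ℤ)+2 := by push_cast; ring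
    rw [RR, hc]
  have hicc : Finset.Icc (-((n:ℤ)+2)) ((n:ℤ)+2)
      = insert ((n:ℤ)+2) (Finset.Icc (-((n:ℤ)+2)) ((n:ℤ)+1)) := by
    ext x; simp [Finset.mem_Icc]; omega
  have key : ∑ k ∈ Finset.Icc (-((n:ℤ)+2)) ((n:ℤ)+2),
      (((1 - q^(2*n+4))
        - (1+q+q^(2*n+3)) * ((1 - q^(((n:ℤ)+2-k).toNat)) * (1 - q^(((n:ℤ)+2+k).toNat)))
        + q * ((1 - q^(((n:ℤ)+2-k).toNat)) * (1 - q^(((n:ℤ)+1-k).toNat))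
             * (1 - q^(((n:ℤ)+2+k).toNat)) * (1 - q^(((n:ℤ)+1+k).toNat))))
        * Rsummand q (n+2) k) = 0 := by
    rw [hicc, Finset.sum_insert (by simp [Finset.mem_Icc])]
    have htel : ∑ k ∈ Finset.Icc (-((n:ℤ)+2)) ((n:ℤ)+1),
        (((1 - q^(2*n+4))
          - (1+q+q^(2*n+3)) * ((1 - q^(((n:ℤ)+2-k).toNat)) * (1 - q^(((n:ℤ)+2+k).toNat)))
          + q * ((1 - q^(((n:ℤ)+2-k).toNat)) * (1 - q^(((n:ℤ)+1-k).toNat))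
               * (1 - q^(((n:ℤ)+2+k).toNat)) * (1 - q^(((n:ℤ)+1+k).toNat))))
          * Rsummand q (n+2) k)
        = (fun m => -(q^(((n:ℤ)+2-m).toNat))^2 * (1 - q^(((n:ℤ)+2+m).toNat))
            * Rsummand q (n+2) m) (((n:ℤ)+1)+1)
          - (fun m => -(q^(((n:ℤ)+2-m).toNat))^2 * (1 - q^(((n:ℤ)+2+m).toNat))
            * Rsummand q (n+2) m) (-((n:ℤ)+2)) := by
      rw [← sum_tel (fun m => -(q^(((n:ℤ)+2-m).toNat))^2 * (1 - q^(((n:ℤ)+2+m).toNat))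
            * Rsummand q (n+2) m) (-((n:ℤ)+2)) ((n:ℤ)+1) (by omega)]
      refine Finset.sum_congr rfl fun k hk => ?_
      have hk' := Finset.mem_Icc.mp hk
      exact Rcert q hq0 hq n k hk'.1 hk'.2
    rw [htel]
    simp only []
    rw [show (((n:ℤ)+2-(((n:ℤ)+1)+1)).toNat) = 0 by omega,
      show (((n:ℤ)+2+(((n:ℤ)+1)+1)).toNat) = 2*n+4 by omega,
      show (((n:ℤ)+2+(-((n:ℤ)+2))).toNat) = 0 by omega,
      show (((n:ℤ)+2-((n:ℤ)+2)).toNat) = 0 by omega,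
      show (((n:ℤ)+1-((n:ℤ)+2)).toNat) = 0 by omega,
      show (((n:ℤ)+2-(-((n:ℤ)+2))).toNat) = 2*n+4 by omega]
    have : ((n:ℤ)+1)+1 = (n:ℤ)+2 := by ring
    rw [this]
    ring
  rw [hRR, Rstep1' q hq n, Rstep2' q hq n]
  have expand : (1 - q^(2*n+4)) * (∑ k ∈ Finset.Icc (-((n:ℤ)+2)) ((n:ℤ)+2), Rsummand q (n+2) k)
      - ((1 + q + q^(2*n+3)) * (∑ k ∈ Finset.Icc (-((n:ℤ)+2)) ((n:ℤ)+2),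
          (1 - q^(((n:ℤ)+2-k).toNat)) * (1 - q^(((n:ℤ)+2+k).toNat)) * Rsummand q (n+2) k)
        - q * (∑ k ∈ Finset.Icc (-((n:ℤ)+2)) ((n:ℤ)+2),
          (1 - q^(((n:ℤ)+2-k).toNat)) * (1 - q^(((n:ℤ)+1-k).toNat))
            * (1 - q^(((n:ℤ)+2+k).toNat)) * (1 - q^(((n:ℤ)+1+k).toNat)) * Rsummand q (n+2) k))
      = ∑ k ∈ Finset.Icc (-((n:ℤ)+2)) ((n:ℤ)+2),
      (((1 - q^(2*n+4))
        - (1+q+q^(2*n+3)) * ((1 - q^(((n:ℤ)+2-k).toNat)) * (1 - q^(((n:ℤ)+2+k).toNat)))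
        + q * ((1 - q^(((n:ℤ)+2-k).toNat)) * (1 - q^(((n:ℤ)+1-k).toNat))
             * (1 - q^(((n:ℤ)+2+k).toNat)) * (1 - q^(((n:ℤ)+1+k).toNat))))
        * Rsummand q (n+2) k) := by
    rw [Finset.mul_sum, Finset.mul_sum, Finset.mul_sum, ← Finset.sum_sub_distrib,
      ← Finset.sum_sub_distrib]
    exact Finset.sum_congr rfl fun k _ => by ring
  have h := expand.trans key
  linear_combination h

lemma base0 (q : ℂ) : LL q 0 = RR q 0 := by
  rw [LL, RR]
  simp [Lsummand, Rsummand, qp]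

lemma base1 (q : ℂ) (hq0 : q ≠ 0) (hq : ‖q‖ < 1) : LL q 1 = RR q 1 := by
  have hIcc : Finset.Icc (-((1:ℕ):ℤ)) ((1:ℕ):ℤ) = {-1, 0, 1} := by decide
  rw [LL, RR, hIcc]
  rw [Finset.sum_range_succ, Finset.sum_range_succ, Finset.sum_range_zero]
  rw [Finset.sum_insert (by decide), Finset.sum_insert (by decide), Finset.sum_singleton]
  rw [Lsummand, Lsummand, Rsummand, Rsummand, Rsummand]
  norm_num
  rw [show Int.toNat 2 = 2 from rfl]
  simp [qp, Finset.prod_range_succ]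
  have h1 : (1:ℂ) - q ≠ 0 := by
    have := one_sub_pow_ne hq 1 (by omega); rwa [pow_one] at this
  have h2 : (1:ℂ) - q*q ≠ 0 := by
    have := one_sub_pow_ne hq 2 (by omega); rwa [sq] at this
  have h3 : (1:ℂ) - q^2 ≠ 0 := by
    have := one_sub_pow_ne hq 2 (by omega); exact this
  field_simp
  ring

theorem stmt14 (q : ℂ) (hq0 : q ≠ 0) (hq : ‖q‖ < 1) (n : ℕ) :
    ∑ k ∈ Finset.range (n + 1), q ^ (k ^ 2) / (qp (q ^ 2) (q ^ 2) k * qp q q (n - k))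
      = ∑ k ∈ Finset.Icc (-(n : ℤ)) (n : ℤ),
          (-1 : ℂ) ^ k * q ^ (2 * k ^ 2)
            / (qp q q ((n : ℤ) - k).toNat * qp q q ((n : ℤ) + k).toNat) := by
  have main : ∀ m : ℕ, LL q m = RR q m := by
    intro m
    induction m using Nat.strong_induction_on with
    | _ m ih =>
      match m with
      | 0 => exact base0 q
      | 1 => exact base1 q hq0 hq
      | (n+2) =>
        have h1 := ih (n+1) (by omega)
        have h0 := ih n (by omega)
        have hne : (1:ℂ) - q^(2*n+4) ≠ 0 := one_sub_pow_ne hq (2*n+4) (by omega)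
        have hL := Lrec q hq n
        rw [show 2*(n+2)-1 = 2*n+3 by omega, show 2*(n+2) = 2*n+4 by omega] at hL
        have e : (1 - q^(2*n+4)) * LL q (n+2) = (1 - q^(2*n+4)) * RR q (n+2) := by
          rw [hL, Rrec q hq0 hq n, h1, h0]
        exact mul_left_cancel₀ hne e
  have := main n
  rw [LL, RR] at this
  simpa [Lsummand, Rsummand] using this
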